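/- In the group algebra ℂ[S_d] of the symmetric group on {1,…,d}, the Jucys–Murphy elements J_m := (1,m) + (2,m) + ⋯ + (m-1,m) for m = 2,…,d satisfy (1 + ξJ_2)(1 + ξJ_3)⋯(1 + ξJ_d) = ∑_{ν ⊢ d} ξ^{d - ℓ(ν)} C_ν, where for each partition ν of d, C_ν denotes the sum of all permutations of cycle type ν and ℓ(ν) is the number of parts of ν. -/

import Mathlib

open scoped Classical

/-- The `m`-th Jucys–Murphy element `J_m = ∑_{i < m} (i, m)` in the group algebra
`ℂ[S_d]` (points labelled by `Fin d`). -/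
noncomputable def jucysMurphy (d : ℕ) (m : Fin d) : MonoidAlgebra ℂ (Equiv.Perm (Fin d)) :=
  ∑ i ∈ Finset.univ.filter (fun i : Fin d => i < m),
    MonoidAlgebra.of ℂ (Equiv.Perm (Fin d)) (Equiv.swap i m)

/-- The conjugacy-class sum `C_ν = ∑_{σ of cycle type ν} σ` in `ℂ[S_d]`, where the cycle type
of `σ` is the partition of `d` given by all its cycle lengths, including fixed points. -/
noncomputable def classSum (d : ℕ) (ν : Nat.Partition d) :
    MonoidAlgebra ℂ (Equiv.Perm (Fin d)) :=
  ∑ σ ∈ Finset.univ.filter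
      (fun σ : Equiv.Perm (Fin d) => (Equiv.Perm.partition σ).parts = ν.parts),
    MonoidAlgebra.of ℂ (Equiv.Perm (Fin d)) σ


open Equiv Equiv.Perm List Finset in
lemma cycle_extend {α : Type*} [DecidableEq α] [Fintype α] {c : Equiv.Perm α} (hc : c.IsCycle)
    {i k : α} (hi : i ∈ c.support) (hk : k ∉ c.support) :
    (c * Equiv.swap i k).IsCycle ∧ (c * Equiv.swap i k).support = insert k c.support := by
  have hci : c i ≠ i := Equiv.Perm.mem_support.mp hi
  have hcci : c (c i) ≠ c i := fun h => hci (c.injective h)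
  obtain ⟨l, hl⟩ : ∃ l, l = c.toList (c i) := ⟨_, rfl⟩
  have hform : l.formPerm = c := by
    rw [hl, Equiv.Perm.formPerm_toList, Equiv.Perm.IsCycle.cycleOf_eq hc hcci]
  have hnodup : l.Nodup := hl ▸ Equiv.Perm.nodup_toList c (c i)
  have hmemsupp : c i ∈ c.support := Equiv.Perm.apply_mem_support.mpr hi
  have hlen : 2 ≤ l.length := hl ▸ Equiv.Perm.two_le_length_toList_iff_mem_support.mpr hmemsupp
  obtain ⟨x, xs, rfl⟩ : ∃ x xs, l = x :: xs := by
    cases l with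
    | nil => simp at hlen
    | cons x xs => exact ⟨x, xs, rfl⟩
  have hlne : x :: xs ≠ [] := by simp
  have hhead : x = c i := by
    have := Equiv.Perm.toList_getElem_zero c (c i) hmemsupp
    simpa [← hl] using this
  have hlast : (x :: xs).getLast hlne = i := by
    apply c.injective
    have h1 : (x :: xs).formPerm ((x :: xs).getLast hlne) = x :=
      List.formPerm_apply_getLast x xs
    rw [hform] at h1
    rw [h1, hhead]
  set l := x :: xs with hldef
  have hknl : k ∉ l := by
    intro hmem
    rw [hl] at hmem
    have := (Equiv.Perm.mem_toList_iff).mp hmem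
    exact hk (Equiv.Perm.support_cycleOf_le c (c i) ((Equiv.Perm.mem_support_cycleOf_iff).mpr this))
  have hkey : c * Equiv.swap i k = (l ++ [k]).formPerm := by
    conv_lhs => rw [← hform]
    have hdl : l.dropLast ++ [i] = l := by
      conv_rhs => rw [← List.dropLast_append_getLast hlne]
      rw [hlast]
    calc l.formPerm * Equiv.swap i k = (l.dropLast ++ [i]).formPerm * Equiv.swap i k := by rw [hdl]
      _ = (l.dropLast ++ [i, k]).formPerm := (List.formPerm_append_pair _ i k).symm
      _ = (l ++ [k]).formPerm := by
          congr 1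
          rw [← hdl]; simp
  have hnodup2 : (l ++ [k]).Nodup := by
    simp [List.nodup_append, hnodup, hknl]
    intro a ha h; exact hknl (h ▸ ha)
  have hlen2 : 2 ≤ (l ++ [k]).length := by simp only [List.length_append, List.length_singleton]; omega
  have hcyc : (c * Equiv.swap i k).IsCycle := by
    rw [hkey]; exact List.isCycle_formPerm hnodup2 hlen2
  have hsuppc : c.support = l.toFinset := by
    rw [← hform]
    exact List.support_formPerm_of_nodup l hnodup (fun y hy => by rw [hy] at hlen; simp at hlen)
  have hsupp : (c * Equiv.swap i k).support = insert k c.support := by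
    rw [hkey, List.support_formPerm_of_nodup _ hnodup2
      (fun y hy => by rw [hy] at hlen2; simp at hlen2), hsuppc]
    rw [List.toFinset_append]
    ext y; simp [or_comm]
  exact ⟨hcyc, hsupp⟩

open Equiv Equiv.Perm Finset in
lemma parts_card_mul_swap {α : Type*} [DecidableEq α] [Fintype α] (σ : Equiv.Perm α)
    {i k : α} (hik : i ≠ k) (hk : σ k = k) :
    (σ * Equiv.swap i k).partition.parts.card + 1 = σ.partition.parts.card := by
  have hksupp : k ∉ σ.support := by simp [Equiv.Perm.mem_support, hk]
  have hcard : ∀ τ : Equiv.Perm α, τ.partition.parts.card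
      = Multiset.card τ.cycleType + (Fintype.card α - τ.support.card) := by
    intro τ
    rw [Equiv.Perm.parts_partition, Multiset.card_add, Multiset.card_replicate]
  by_cases hi : σ i = i
  · -- σ fixes i too; swap is disjoint from σ
    have hdisj : σ.Disjoint (Equiv.swap i k) := by
      intro x
      by_cases hx : x = i
      · subst hx; exact Or.inl hi
      · by_cases hx' : x = k
        · subst hx'; exact Or.inl hk
        · exact Or.inr (Equiv.swap_apply_of_ne_of_ne hx hx')
    have hct : (σ * Equiv.swap i k).cycleType = σ.cycleType + {2} := by
      rw [hdisj.cycleType_mul, (Equiv.Perm.IsCycle.cycleType (Equiv.Perm.isCycle_swap hik)),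
        Equiv.Perm.card_support_swap hik]
    have hs : (σ * Equiv.swap i k).support.card = σ.support.card + 2 := by
      rw [hdisj.card_support_mul, Equiv.Perm.card_support_swap hik]
    have hb : (σ * Equiv.swap i k).support.card ≤ Fintype.card α := Finset.card_le_univ _
    rw [hcard, hcard, hct, hs, Multiset.card_add]
    simp only [Multiset.card_singleton]
    omega
  · -- i is moved by σ; merge k into cycle of i
    have hisupp : i ∈ σ.support := Equiv.Perm.mem_support.mpr hi
    set c := σ.cycleOf i with hc
    have hcyc : c.IsCycle := Equiv.Perm.isCycle_cycleOf σ hi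
    have hic : i ∈ c.support := by
      rw [Equiv.Perm.mem_support_cycleOf_iff]
      exact ⟨Equiv.Perm.SameCycle.refl _ _, hisupp⟩
    have hkc : k ∉ c.support := fun h => hksupp (Equiv.Perm.support_cycleOf_le σ i h)
    have hmem : c ∈ σ.cycleFactorsFinset :=
      Equiv.Perm.cycleOf_mem_cycleFactorsFinset_iff.mpr hisupp
    have hdisj : (σ * c⁻¹).Disjoint c :=
      Equiv.Perm.disjoint_mul_inv_of_mem_cycleFactorsFinset hmem
    set g := σ * c⁻¹ with hg
    have hσ : σ = g * c := by rw [hg]; group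
    obtain ⟨hcyc', hsupp'⟩ := cycle_extend hcyc hic hkc
    set c' := c * Equiv.swap i k with hc'
    have hτ : σ * Equiv.swap i k = g * c' := by rw [hσ, hc']; group
    have hgk : g k = k := by
      have hck : c k = k := Equiv.Perm.notMem_support.mp hkc
      rw [hg]
      simp only [Equiv.Perm.mul_apply]
      have : c⁻¹ k = k := by rw [Equiv.Perm.inv_eq_iff_eq]; exact hck.symm
      rw [this, hk]
    have hdisj' : g.Disjoint c' := by
      intro x
      by_cases hx : c' x = x
      · exact Or.inr hx
      · have : x ∈ c'.support := Equiv.Perm.mem_support.mpr hx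
        rw [hsupp', Finset.mem_insert] at this
        rcases this with h | h
        · subst h; exact Or.inl hgk
        · rcases hdisj x with h' | h'
          · exact Or.inl h'
          · exact absurd h (by simp [Equiv.Perm.notMem_support.mpr h'])
    have hsc' : c'.support.card = c.support.card + 1 := by
      rw [hsupp', Finset.card_insert_of_notMem hkc]
    have hctσ : σ.cycleType = g.cycleType + {c.support.card} := by
      rw [hσ, hdisj.cycleType_mul, hcyc.cycleType]
    have hctτ : (σ * Equiv.swap i k).cycleType = g.cycleType + {c.support.card + 1} := by
      rw [hτ, hdisj'.cycleType_mul, hcyc'.cycleType, hsc']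
    have hsσ : σ.support.card = g.support.card + c.support.card := by
      rw [hσ, hdisj.card_support_mul]
    have hsτ : (σ * Equiv.swap i k).support.card = g.support.card + (c.support.card + 1) := by
      rw [hτ, hdisj'.card_support_mul, hsc']
    have hb : (σ * Equiv.swap i k).support.card ≤ Fintype.card α := Finset.card_le_univ _
    rw [hcard, hcard, hctσ, hctτ, hsσ, hsτ, Multiset.card_add, Multiset.card_add]
    simp only [Multiset.card_singleton]
    omega

-- bounds on parts.card
lemma parts_card_le (d : ℕ) (ν : Nat.Partition d) : ν.parts.card ≤ d := by
  calc (ν.parts.card : ℕ) = (ν.parts.map (fun _ => 1)).sum := by simp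
    _ ≤ ν.parts.sum := by
        apply Multiset.sum_map_le_sum _ (fun x hx => ν.parts_pos hx)
    _ = d := ν.parts_sum

lemma parts_card_pos (d : ℕ) (hd : 0 < d) (ν : Nat.Partition d) : 0 < ν.parts.card := by
  rw [Multiset.card_pos]
  intro h
  have := ν.parts_sum
  rw [h] at this
  simp at this
  omega

noncomputable def termOf (d : ℕ) (ξ : ℂ) (σ : Equiv.Perm (Fin d)) :
    MonoidAlgebra ℂ (Equiv.Perm (Fin d)) :=
  ξ ^ (d - σ.partition.parts.card) • MonoidAlgebra.of ℂ (Equiv.Perm (Fin d)) σ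

noncomputable def Sfix (d k : ℕ) : Finset (Equiv.Perm (Fin d)) :=
  Finset.univ.filter (fun σ => ∀ j : Fin d, k ≤ (j : ℕ) → σ j = j)

lemma main_aux (d : ℕ) (ξ : ℂ) (k : ℕ) (hk : k ≤ d) :
    (((List.finRange d).take k).map
        (fun m => (1 : MonoidAlgebra ℂ (Equiv.Perm (Fin d))) + ξ • jucysMurphy d m)).prod
      = ∑ σ ∈ Sfix d k, termOf d ξ σ := by
  induction k with
  | zero =>
    have h1 : Sfix d 0 = {1} := by
      ext σ
      simp only [Sfix, Finset.mem_filter, Finset.mem_univ, true_and, Finset.mem_singleton]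
      constructor
      · intro h; ext x; rw [h x (Nat.zero_le _)]; rfl
      · intro h; subst h; intro j _; rfl
    rw [h1]
    simp only [List.take_zero, List.map_nil, List.prod_nil, Finset.sum_singleton]
    have hp : (1 : Equiv.Perm (Fin d)).partition.parts.card = d := by
      rw [Equiv.Perm.parts_partition, Multiset.card_add, Equiv.Perm.cycleType_one,
        Equiv.Perm.support_one, Multiset.card_replicate]
      simp [Fintype.card_fin]
    rw [termOf, hp]
    simp only [Nat.sub_self, pow_zero, one_smul]
    exact (map_one (MonoidAlgebra.of ℂ (Equiv.Perm (Fin d)))).symm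
  | succ k ih =>
    have hk' : k < d := hk
    set m : Fin d := ⟨k, hk'⟩ with hm
    have hmval : (m : ℕ) = k := rfl
    have htake : (List.finRange d).take (k+1) = (List.finRange d).take k ++ [m] := by
      rw [List.take_succ]
      congr 1
      have hlt : k < (List.finRange d).length := by simpa using hk'
      rw [List.getElem?_eq_getElem hlt]
      simp only [List.getElem_finRange, Option.toList_some]
      congr 1
    rw [htake, List.map_append, List.prod_append, List.map_singleton, List.prod_singleton,
      ih (le_of_lt hk')]
    have hcard_le : ∀ σ : Equiv.Perm (Fin d), σ.partition.parts.card ≤ d := by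
      intro σ
      have := parts_card_le (Fintype.card (Fin d)) σ.partition
      simpa using this
    have hcard_pos : ∀ σ : Equiv.Perm (Fin d), 0 < σ.partition.parts.card := by
      intro σ
      have := parts_card_pos (Fintype.card (Fin d)) (by simp; omega) σ.partition
      simpa using this
    -- the exponent identity
    have hexp : ∀ (σ : Equiv.Perm (Fin d)) (i : Fin d), i ≠ m → σ m = m →
        d - (σ * Equiv.swap i m).partition.parts.card = (d - σ.partition.parts.card) + 1 := by
      intro σ i hi hσm
      have h1 := parts_card_mul_swap σ hi hσm
      have h2 := hcard_le σ
      have h3 := hcard_pos σ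
      omega
    -- split RHS
    have hsplit : ∑ σ ∈ (Sfix d (k+1)).filter (fun σ => σ m = m), termOf d ξ σ
        + ∑ σ ∈ (Sfix d (k+1)).filter (fun σ => ¬ σ m = m), termOf d ξ σ
        = ∑ σ ∈ Sfix d (k+1), termOf d ξ σ :=
      Finset.sum_filter_add_sum_filter_not (Sfix d (k+1)) (fun σ => σ m = m) _
    have hfix : (Sfix d (k+1)).filter (fun σ => σ m = m) = Sfix d k := by
      ext σ
      simp only [Sfix, Finset.mem_filter, Finset.mem_univ, true_and]
      constructor
      · rintro ⟨h1, h2⟩ j hj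
        rcases Nat.lt_or_ge (j : ℕ) (k+1) with h | h
        · have : (j : ℕ) = k := by omega
          have : j = m := Fin.ext this
          rw [this]; exact h2
        · exact h1 j h
      · intro h
        refine ⟨fun j hj => h j (by omega), h m (le_refl k)⟩
    -- bijection for the movers
    have hmovers : ∑ τ ∈ (Sfix d (k+1)).filter (fun σ => ¬ σ m = m), termOf d ξ τ
        = ∑ p ∈ (Sfix d k) ×ˢ (Finset.univ.filter (fun i : Fin d => i < m)),
            termOf d ξ (p.1 * Equiv.swap p.2 m) := by
      refine Finset.sum_nbij' (fun τ => (τ * Equiv.swap (τ⁻¹ m) m, τ⁻¹ m))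
        (fun p => p.1 * Equiv.swap p.2 m) ?_ ?_ ?_ ?_ ?_
      · -- maps into product set
        intro τ hτ
        simp only [Finset.mem_filter, Sfix, Finset.mem_univ, true_and] at hτ
        obtain ⟨h1, h2⟩ := hτ
        have hpm : (τ⁻¹ m : Fin d) ≠ m := fun h => h2 (by
          conv_lhs => rw [← h]
          simp)
        have hplt : ((τ⁻¹ m : Fin d) : ℕ) < k + 1 := by
          by_contra h
          push_neg at h
          have := h1 (τ⁻¹ m) h
          rw [show τ (τ⁻¹ m) = m from τ.apply_symm_apply m] at this
          exact hpm this.symm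
        have hpltk : (τ⁻¹ m : Fin d) < m := by
          have hne : ((τ⁻¹ m : Fin d) : ℕ) ≠ k := fun h => hpm (Fin.ext (h.trans hmval.symm))
          simp only [Fin.lt_def, hmval]
          omega
        simp only [Finset.mem_product, Sfix, Finset.mem_filter, Finset.mem_univ, true_and]
        refine ⟨fun j hj => ?_, hpltk⟩
        by_cases hjm : j = m
        · subst hjm
          simp [Equiv.Perm.mul_apply, Equiv.swap_apply_right]
        · have hjp : j ≠ τ⁻¹ m := by
            intro h
            rw [h] at hjm
            have : ((τ⁻¹ m : Fin d) : ℕ) < k + 1 := hplt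
            omega
          simp only [Equiv.Perm.mul_apply]
          rw [Equiv.swap_apply_of_ne_of_ne hjp hjm]
          have : (j : ℕ) ≠ k := fun h => hjm (Fin.ext h)
          exact h1 j (by omega)
      · -- maps into movers set
        rintro ⟨σ, i⟩ hp
        simp only [Finset.mem_product, Sfix, Finset.mem_filter, Finset.mem_univ, true_and] at hp
        obtain ⟨h1, h2⟩ := hp
        have him : i ≠ m := ne_of_lt h2
        have hσm : σ m = m := h1 m (le_refl k)
        simp only [Finset.mem_filter, Sfix, Finset.mem_univ, true_and]
        constructor
        · intro j hj
          have hjm : j ≠ m := fun h => by rw [h, hmval] at hj; omega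
          have hji : j ≠ i := fun h => by
            rw [h] at hj
            have hlt : (i : ℕ) < (m : ℕ) := h2
            rw [hmval] at hlt
            omega
          simp only [Equiv.Perm.mul_apply]
          rw [Equiv.swap_apply_of_ne_of_ne hji hjm]
          exact h1 j (by omega)
        · simp only [Equiv.Perm.mul_apply, Equiv.swap_apply_right]
          intro h
          have : σ i = σ m := by rw [h, hσm]
          have : i = m := σ.injective this
          exact him this
      · -- left inverse
        intro τ hτ
        simp only
        rw [mul_assoc]
        have : Equiv.swap (τ⁻¹ m) m * Equiv.swap (τ⁻¹ m) m = 1 := Equiv.swap_mul_self _ _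
        rw [this, mul_one]
      · -- right inverse
        rintro ⟨σ, i⟩ hp
        simp only [Finset.mem_product, Sfix, Finset.mem_filter, Finset.mem_univ, true_and] at hp
        have hσm : σ m = m := hp.1 m (le_refl k)
        have hinv : (σ * Equiv.swap i m)⁻¹ m = i := by
          rw [mul_inv_rev, Equiv.Perm.mul_apply, Equiv.swap_inv]
          have : σ⁻¹ m = m := by rw [Equiv.Perm.inv_eq_iff_eq]; exact hσm.symm
          rw [this, Equiv.swap_apply_right]
        refine Prod.ext ?_ hinv
        show (σ * Equiv.swap i m) * Equiv.swap ((σ * Equiv.swap i m)⁻¹ m) m = σ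
        rw [hinv, mul_assoc, Equiv.swap_mul_self, mul_one]
      · intro τ hτ
        simp only
        rw [mul_assoc, Equiv.swap_mul_self, mul_one]
    -- now compute
    rw [← hsplit, hfix]
    rw [mul_add, mul_one]
    congr 1
    rw [jucysMurphy, mul_smul_comm, Finset.sum_mul_sum]
    rw [hmovers, Finset.sum_product, Finset.smul_sum]
    apply Finset.sum_congr rfl
    intro σ hσ
    rw [Finset.smul_sum]
    apply Finset.sum_congr rfl
    intro i hi
    simp only [Finset.mem_filter, Sfix, Finset.mem_univ, true_and] at hσ hi
    have him : i ≠ m := ne_of_lt hi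
    have hσm : σ m = m := hσ m (le_refl k)
    rw [termOf, termOf, hexp σ i him hσm]
    rw [smul_mul_assoc, ← map_mul, pow_succ]
    rw [mul_smul]
    rw [smul_comm ξ]

def pcast {m n : ℕ} (h : m = n) (P : Nat.Partition m) : Nat.Partition n :=
  ⟨P.parts, P.parts_pos, h ▸ P.parts_sum⟩

theorem jucysMurphy_product_eq_sum_classSums (d : ℕ) (ξ : ℂ) :
    (((List.finRange d).map
        (fun m => (1 : MonoidAlgebra ℂ (Equiv.Perm (Fin d))) + ξ • jucysMurphy d m)).prod)
      = ∑ ν : Nat.Partition d, ξ ^ (d - ν.parts.card) • classSum d ν := by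
  have hlhs : (List.finRange d).map
        (fun m => (1 : MonoidAlgebra ℂ (Equiv.Perm (Fin d))) + ξ • jucysMurphy d m)
      = ((List.finRange d).take d).map
        (fun m => (1 : MonoidAlgebra ℂ (Equiv.Perm (Fin d))) + ξ • jucysMurphy d m) := by
    congr 1
    exact (List.take_of_length_le (by simp)).symm
  rw [hlhs, main_aux d ξ d le_rfl]
  have hSfix : Sfix d d = Finset.univ := by
    apply Finset.filter_true_of_mem
    intro σ _ j hj
    exact absurd j.isLt (by omega)
  rw [hSfix]
  -- regroup RHS by fibers
  set g : Equiv.Perm (Fin d) → Nat.Partition d :=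
    fun σ => pcast (Fintype.card_fin d) σ.partition with hg
  have hgparts : ∀ σ, (g σ).parts = σ.partition.parts := fun σ => rfl
  have hrhs : ∀ ν : Nat.Partition d,
      ξ ^ (d - ν.parts.card) • classSum d ν
        = ∑ σ ∈ Finset.univ.filter (fun σ => g σ = ν), termOf d ξ σ := by
    intro ν
    rw [classSum, Finset.smul_sum]
    have hfil : Finset.univ.filter
        (fun σ : Equiv.Perm (Fin d) => (Equiv.Perm.partition σ).parts = ν.parts)
        = Finset.univ.filter (fun σ => g σ = ν) := by
      apply Finset.filter_congr
      intro σ _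
      constructor
      · intro h; exact Nat.Partition.ext ((hgparts σ).trans h)
      · intro h; rw [← hgparts σ, h]
    rw [hfil]
    apply Finset.sum_congr rfl
    intro σ hσ
    rw [Finset.mem_filter] at hσ
    rw [termOf]
    congr 2
    rw [← hσ.2, hgparts]
  calc ∑ σ : Equiv.Perm (Fin d), termOf d ξ σ
      = ∑ ν : Nat.Partition d, ∑ σ ∈ Finset.univ.filter (fun σ => g σ = ν), termOf d ξ σ :=
        (Finset.sum_fiberwise Finset.univ g (termOf d ξ)).symm
    _ = ∑ ν : Nat.Partition d, ξ ^ (d - ν.parts.card) • classSum d ν := by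
        apply Finset.sum_congr rfl
        intro ν _
        exact (hrhs ν).symm
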